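/- Let P be a finite T_0 space with a Σ_n-action and Q an arbitrary finite T_0 space. Then continuous maps f_1, ..., f_n : P → Q satisfying f_j(g·x) = f_{g(j)}(x) are symmetrically homotopic (in the topological sense, via a Σ_n-compatible homotopy P × I_n → Q) if and only if they are symmetrically combinatorially homotopic (via a Σ_n-compatible order-preserving map P × J_{n,m} → Q for some m ≥ 0). -/

import Mathlib

noncomputable section
open scoped ENat
attribute [local instance] Classical.propDecidable

universe u v

/-! ### The wedge `I_n` of `n` unit intervals glued at `0` -/

def wedgeSetoid (n : ℕ) : Setoid (Fin n × unitInterval) where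
  r p q := p = q ∨ (p.2 = 0 ∧ q.2 = 0)
  iseqv := by
    refine ⟨fun _ => Or.inl rfl, ?_, ?_⟩
    · rintro p q (rfl | ⟨h1, h2⟩)
      · exact Or.inl rfl
      · exact Or.inr ⟨h2, h1⟩
    · rintro p q s (rfl | ⟨h1, h2⟩) h
      · exact h
      · rcases h with rfl | ⟨h3, h4⟩
        · exact Or.inr ⟨h1, h2⟩
        · exact Or.inr ⟨h1, h4⟩

def WedgeI (n : ℕ) : Type := Quotient (wedgeSetoid n)

instance (n : ℕ) : TopologicalSpace (WedgeI n) := by unfold WedgeI; infer_instance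

/-- the point `t_j` on the `j`-th arm of `I_n`. -/
def arm (n : ℕ) (j : Fin n) (t : unitInterval) : WedgeI n :=
  Quotient.mk (wedgeSetoid n) (j, t)

/-- The `n`-th symmetric topological complexity `TC^Σ_n(X)`:  the equivariant sectional
category of the fibration `e_n : X^{I_n} → X^n`. -/
def TCSigma (n : ℕ) (X : Type v) [TopologicalSpace X] : ℕ∞ :=
  sInf {k : ℕ∞ | ∃ k0 : ℕ, k = (k0 : ℕ∞) ∧
    ∃ U : Fin k0 → Set (Fin n → X),
      (∀ i, IsOpen (U i)) ∧
      (∀ x, ∃ i, x ∈ U i) ∧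
      (∀ i (g : Equiv.Perm (Fin n)), ∀ x ∈ U i, (fun j => x (g j)) ∈ U i) ∧
      ∀ i, ∃ s : C(↥(U i), C(WedgeI n, X)),
        (∀ (x : ↥(U i)) (j : Fin n), (s x) (arm n j 1) = x.1 j) ∧
        ∀ (g : Equiv.Perm (Fin n)) (x : Fin n → X) (hx : x ∈ U i)
          (hgx : (fun j => x (g j)) ∈ U i) (t : unitInterval) (j : Fin n),
          (s ⟨fun j => x (g j), hgx⟩) (arm n j t) = (s ⟨x, hx⟩) (arm n (g j) t)}

/-! ### Abstract simplicial complexes, simplicial maps and contiguity -/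

structure ASC (V : Type u) where
  faces : Set (Finset V)
  nonempty_of_mem : ∀ {σ : Finset V}, σ ∈ faces → σ.Nonempty
  down_closed : ∀ {σ τ : Finset V}, σ ∈ faces → τ ⊆ σ → τ.Nonempty → τ ∈ faces

def IsSimplicialMap {V : Type u} {W : Type v} (K : ASC V) (L : ASC W) (f : V → W) : Prop :=
  ∀ σ ∈ K.faces, σ.image f ∈ L.faces

/-- one-step contiguity (of simplicial maps). -/
def OneCont {V : Type u} {W : Type v} (K : ASC V) (L : ASC W) (f g : V → W) : Prop :=
  IsSimplicialMap K L f ∧ IsSimplicialMap K L g ∧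
    ∀ σ ∈ K.faces, σ.image f ∪ σ.image g ∈ L.faces

/-- `c`-contiguity. -/
def Contig {V : Type u} {W : Type v} (K : ASC V) (L : ASC W) (c : ℕ) (f g : V → W) : Prop :=
  ∃ φ : ℕ → V → W, φ 0 = f ∧ φ c = g ∧ ∀ i < c, OneCont K L (φ i) (φ (i + 1))

/-- `v` is a vertex of `K`. -/
def vertexOf {V : Type u} (K : ASC V) (v : V) : Prop := {v} ∈ K.faces

/-- Symmetric contiguity of the family `f_1, …, f_n : K → L` relative to an action `act` of
`Σ_n` on the vertices of `K`. -/
def SymContiguousOn {V : Type u} {W : Type v} (n : ℕ) (act : Equiv.Perm (Fin n) → V → V)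
    (K : ASC V) (L : ASC W) (f : Fin n → V → W) : Prop :=
  (∀ (j : Fin n) (g : Equiv.Perm (Fin n)) (v : V), vertexOf K v → f j (act g v) = f (g j) v) ∧
  ∃ (c : ℕ) (φ : Fin n → ℕ → V → W), 0 < c ∧
    (∀ j j', φ j 0 = φ j' 0) ∧
    (∀ (j : Fin n) (g : Equiv.Perm (Fin n)) (v : V), vertexOf K v → φ j 0 (act g v) = φ j 0 v) ∧
    (∀ j, φ j c = f j) ∧
    (∀ j l, l < c → OneCont K L (φ j l) (φ j (l + 1))) ∧
    (∀ (j : Fin n) (l : ℕ) (g : Equiv.Perm (Fin n)) (v : V),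
      vertexOf K v → l ≤ c → φ j l (act g v) = φ (g j) l v)
/-! ### Geometric realization -/

def ASC.realization {V : Type u} [Fintype V] (K : ASC V) : Set (V → ℝ) :=
  {α | (∀ v, 0 ≤ α v) ∧ (∑ v, α v) = 1 ∧ ∃ σ ∈ K.faces, ∀ v, α v ≠ 0 → v ∈ σ}

/-- the open star of a vertex in the realization. -/
def ASC.star {V : Type u} [Fintype V] (K : ASC V) (v : V) : Set (V → ℝ) :=
  {α | α ∈ K.realization ∧ α v ≠ 0}

/-- realization of a vertex map (pushforward of weights). -/
def realizeMap {V : Type u} {W : Type v} [Fintype V] (f : V → W) (α : V → ℝ) : W → ℝ :=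
  fun w => ∑ v ∈ Finset.univ.filter (fun v => f v = w), α v

/-! ### Barycentric subdivision of a simplicial complex -/

/-- the barycentric subdivision: vertices are the simplices of `K`, simplices are chains. -/
def sdC {W : Type u} (K : ASC W) : ASC (Finset W) where
  faces := {c | c.Nonempty ∧ (∀ σ ∈ c, σ ∈ K.faces) ∧ IsChain (· ⊆ ·) (c : Set (Finset W))}
  nonempty_of_mem h := h.1
  down_closed := by
    intro σ τ hσ hsub hne
    exact ⟨hne, fun x hx => hσ.2.1 x (hsub hx), hσ.2.2.mono (Finset.coe_subset.mpr hsub)⟩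

/-- the canonical linear map `|sd K| → |K|` sending the vertex `σ` to the barycenter of `σ`. -/
def stepReal (W : Type u) [Fintype W] (β : Finset W → ℝ) : W → ℝ :=
  fun w => ∑ σ : Finset W, β σ * (if w ∈ σ then ((σ.card : ℝ))⁻¹ else 0)

/-! ### Order complexes, products, lower-set (Alexandrov) topologies -/

/-- the order complex of a poset: simplices are finite nonempty chains. -/
def OC (P : Type u) [Preorder P] : ASC P where
  faces := {σ | σ.Nonempty ∧ IsChain (· ≤ ·) (σ : Set P)}
  nonempty_of_mem h := h.1
  down_closed := by
    intro σ τ hσ hsub hne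
    exact ⟨hne, hσ.2.mono (Finset.coe_subset.mpr hsub)⟩

/-- the `n`-fold ordered cartesian product `K^n` of an ordered simplicial complex. -/
def powC {V : Type u} [PartialOrder V] (K : ASC V) (n : ℕ) : ASC (Fin n → V) where
  faces := {S | S.Nonempty ∧ IsChain (· ≤ ·) (S : Set (Fin n → V)) ∧
    ∀ j, S.image (fun x => x j) ∈ K.faces}
  nonempty_of_mem h := h.1
  down_closed := by
    intro S T hS hsub hne
    refine ⟨hne, hS.2.1.mono (Finset.coe_subset.mpr hsub), fun j => ?_⟩
    exact K.down_closed (hS.2.2 j) (Finset.image_subset_image hsub) (hne.image _)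

/-- The Alexandrov topology associated to a relation: open sets are the down-sets. -/
def lowTop (α : Type u) (le : α → α → Prop) : TopologicalSpace α where
  IsOpen U := ∀ a ∈ U, ∀ b, le b a → b ∈ U
  isOpen_univ := fun _ _ _ _ => trivial
  isOpen_inter := fun U V hU hV a ha b hb => ⟨hU a ha.1 b hb, hV a ha.2 b hb⟩
  isOpen_sUnion := by
    intro S hS a ha b hb
    obtain ⟨U, hUS, haU⟩ := ha
    exact ⟨U, hUS, hS U hUS a haU b hb⟩

/-- product topology, with an explicitly given topology on the first factor. -/
def prodTop (P : Type u) (lp : TopologicalSpace P) (Y : Type v) [ty : TopologicalSpace Y] :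
    TopologicalSpace (P × Y) := @instTopologicalSpaceProd P Y lp ty
/-! ### The finite "wedge of fences" poset `J_{n,m}` -/

/-- `J_{n,m}`: `none` is the common basepoint `0`, `some (j, i)` is the point `(i+1)_j`
on the `j`-th fence. -/
abbrev JP (n m : ℕ) : Type := Option (Fin n × Fin m)

/-- the zigzag (fence) order on values `0,1,2,…`:  `e ≤ o` when `e` is even, `o` odd and
they are adjacent. -/
def fLE (a b : ℕ) : Prop := a = b ∨ (a % 2 = 0 ∧ b % 2 = 1 ∧ (b = a + 1 ∨ a = b + 1))

/-- the order relation on `J_{n,m}`. -/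
def JLE {n m : ℕ} : JP n m → JP n m → Prop
  | none, none => True
  | none, some q => fLE 0 (q.2.1 + 1)
  | some p, none => fLE (p.2.1 + 1) 0
  | some p, some q => p.1 = q.1 ∧ fLE (p.2.1 + 1) (q.2.1 + 1)

/-- the end point `m_j` of the `j`-th fence. -/
def endPt (n m : ℕ) (j : Fin n) : JP n m :=
  if h : 0 < m then some (j, ⟨m - 1, by omega⟩) else none

/-- the action of `Σ_n` on `J_{n,m}` permuting the fences. -/
def jAct {n m : ℕ} (g : Equiv.Perm (Fin n)) : JP n m → JP n m :=
  Option.map (fun p => (g p.1, p.2))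

/-- order-preserving maps out of `J_{n,m}`. -/
def JMono {n m : ℕ} {P : Type u} [Preorder P] (γ : JP n m → P) : Prop :=
  ∀ a b, JLE a b → γ a ≤ γ b

/-! ### Iterated barycentric subdivisions (concrete model) -/

/-- `SdT V r` is the `r`-fold iterated `Finset` of `V`: the potential vertices of the `r`-fold
barycentric subdivision. -/
def SdT (V : Type u) : ℕ → Type u
  | 0 => V
  | r + 1 => Finset (SdT V r)

/-- the order on `SdT`: the given relation at level `0`, inclusion at higher levels. -/
def SdLE (V : Type u) (le0 : V → V → Prop) : (r : ℕ) → SdT V r → SdT V r → Prop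
  | 0 => le0
  | r + 1 => fun (a b : Finset (SdT V r)) => a ⊆ b

/-- elements of `SdT V r` which are genuine iterated chains, i.e. points of `sd^r`. -/
def SdOK (V : Type u) (le0 : V → V → Prop) : (r : ℕ) → SdT V r → Prop
  | 0 => fun _ => True
  | r + 1 => fun (c : Finset (SdT V r)) =>
      c.Nonempty ∧ (∀ x ∈ c, SdOK V le0 r x) ∧
      ∀ x ∈ c, ∀ y ∈ c, SdLE V le0 r x y ∨ SdLE V le0 r y x

/-- functorial lift of a self map to iterated subdivisions. -/
def SdMap (V : Type u) (f : V → V) : (r : ℕ) → SdT V r → SdT V r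
  | 0 => f
  | r + 1 => fun (c : Finset (SdT V r)) => c.image (SdMap V f r)

instance sdNonempty (V : Type u) [Nonempty V] : ∀ r, Nonempty (SdT V r)
  | 0 => ‹Nonempty V›
  | r + 1 => ⟨(∅ : Finset (SdT V r))⟩

instance sdFintype (V : Type u) [Fintype V] : ∀ r, Fintype (SdT V r)
  | 0 => ‹Fintype V›
  | r + 1 => letI := sdFintype V r; inferInstanceAs (Fintype (Finset (SdT V r)))

/-- the greatest element of a finite set w.r.t. a relation (junk value if there is none). -/
def grIn {α : Type u} [Nonempty α] (le : α → α → Prop) (c : Finset α) : α :=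
  if h : ∃ x, x ∈ c ∧ ∀ y ∈ c, le y x then h.choose else Classical.arbitrary α

/-- the iterated "last element" map `τ^r : sd^r(P) → P`. -/
def SdTau (V : Type u) [Nonempty V] (le0 : V → V → Prop) : (r : ℕ) → SdT V r → V
  | 0 => fun x => x
  | r + 1 => fun (c : Finset (SdT V r)) => SdTau V le0 r (grIn (SdLE V le0 r) c)

/-- the permutation action on `P^n`. -/
def pAct {X : Type u} {n : ℕ} (g : Equiv.Perm (Fin n)) (x : Fin n → X) : Fin n → X :=
  fun j => x (g j)

/-- open subsets of `sd^r` (in its Alexandrov topology), as sets of iterated chains. -/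
def SdOpen (X : Type u) (le0 : X → X → Prop) (r : ℕ) (U : Set (SdT X r)) : Prop :=
  (∀ x ∈ U, SdOK X le0 r x) ∧
  ∀ a ∈ U, ∀ b, SdOK X le0 r b → SdLE X le0 r b a → b ∈ U

/-! ### Higher symmetric combinatorial complexity -/

/-- `CC^{Σ,r}_{n,m}(P) ≤ k`. -/
def CCle (P : Type u) [PartialOrder P] [Nonempty P] (n m r k : ℕ) : Prop :=
  ∃ U : Fin k → Set (SdT (Fin n → P) r),
    (∀ i, SdOpen (Fin n → P) (· ≤ ·) r (U i)) ∧
    (∀ x, SdOK (Fin n → P) (· ≤ ·) r x → ∃ i, x ∈ U i) ∧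
    (∀ i (g : Equiv.Perm (Fin n)), ∀ x ∈ U i, SdMap (Fin n → P) (pAct g) r x ∈ U i) ∧
    (∀ i, ∃ s : SdT (Fin n → P) r → JP n m → P,
      (∀ x ∈ U i, JMono (s x)) ∧
      (∀ x ∈ U i, ∀ y ∈ U i, SdLE (Fin n → P) (· ≤ ·) r x y → ∀ t, s x t ≤ s y t) ∧
      (∀ (g : Equiv.Perm (Fin n)), ∀ x ∈ U i, ∀ t, s (SdMap (Fin n → P) (pAct g) r x) t = s x (jAct g t)) ∧
      (∀ x ∈ U i, ∀ j : Fin n, s x (endPt n m j) = SdTau (Fin n → P) (· ≤ ·) r x j))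

/-- the value `CC^{Σ,r}_{n,m}(P)` (`∞` if there is no such cover). -/
def CCnm (P : Type u) [PartialOrder P] [Nonempty P] (n m r : ℕ) : ℕ∞ :=
  sInf {k : ℕ∞ | ∃ k0 : ℕ, k = (k0 : ℕ∞) ∧ CCle P n m r k0}

/-- the stable value `CC^{Σ,r}_n(P)` (minimum over all fence lengths `m`). -/
def CCr (P : Type u) [PartialOrder P] [Nonempty P] (n r : ℕ) : ℕ∞ :=
  sInf {k : ℕ∞ | ∃ k0 m : ℕ, k = (k0 : ℕ∞) ∧ CCle P n m r k0}
/-! ### Iterated barycentric subdivision of a simplicial complex, and `SC^{Σ,r}_n` -/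

/-- the `r`-fold barycentric subdivision `sd^r(K)`. -/
def CIter {V : Type u} (K : ASC V) : (r : ℕ) → ASC (SdT V r)
  | 0 => K
  | r + 1 => sdC (CIter K r)

/-- the iterated linear map `|sd^r K| → |K|`. -/
def iterReal (V : Type u) [Fintype V] : (r : ℕ) → (SdT V r → ℝ) → (V → ℝ)
  | 0 => fun α => α
  | r + 1 => fun (β : Finset (SdT V r) → ℝ) => iterReal V r (stepReal (SdT V r) β)

/-- composition of the chosen one-step approximations `ι : sd^{s+1} → sd^s`, giving
`ι^r : sd^r(K^n) → K^n`. -/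
def compIota {V' : Type u} (ιs : (s : ℕ) → Finset (SdT V' s) → SdT V' s) :
    (r : ℕ) → SdT V' r → V'
  | 0 => fun x => x
  | r + 1 => fun (x : Finset (SdT V' r)) => compIota ιs r (ιs r x)

/-- the family `ιs` consists, up to level `r`, of `Σ_n`-equivariant simplicial approximations
of the identity of `|K^n|`. -/
def GoodIota {V : Type u} [Fintype V] [PartialOrder V] (K : ASC V) (n r : ℕ)
    (ιs : (s : ℕ) → Finset (SdT (Fin n → V) s) → SdT (Fin n → V) s) : Prop :=
  ∀ s, s < r →
    IsSimplicialMap (CIter (powC K n) (s + 1)) (CIter (powC K n) s) (ιs s) ∧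
    (∀ (v : SdT (Fin n → V) (s + 1)), ∀ α ∈ (CIter (powC K n) (s + 1)).star v,
      stepReal (SdT (Fin n → V) s) α ∈ (CIter (powC K n) s).star (ιs s v)) ∧
    (∀ (g : Equiv.Perm (Fin n)) (σ : SdT (Fin n → V) (s + 1)),
      ιs s (SdMap (Fin n → V) (pAct g) (s + 1) σ) = SdMap (Fin n → V) (pAct g) s (ιs s σ))

/-- `SC^{Σ,r}_n(K) ≤ k` (with respect to the chosen approximations `ιs`). -/
def SCle {V : Type u} [Fintype V] [PartialOrder V] (K : ASC V) (n r : ℕ)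
    (ιs : (s : ℕ) → Finset (SdT (Fin n → V) s) → SdT (Fin n → V) s) (k : ℕ) : Prop :=
  ∃ L : Fin k → ASC (SdT (Fin n → V) r),
    (∀ i, (L i).faces ⊆ (CIter (powC K n) r).faces) ∧
    (∀ σ ∈ (CIter (powC K n) r).faces, ∃ i, σ ∈ (L i).faces) ∧
    (∀ i (g : Equiv.Perm (Fin n)), ∀ σ ∈ (L i).faces,
      σ.image (SdMap (Fin n → V) (pAct g) r) ∈ (L i).faces) ∧
    (∀ i, SymContiguousOn n (fun g => SdMap (Fin n → V) (pAct g) r) (L i) K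
      (fun j x => compIota ιs r x j))

/-- the value `SC^{Σ,r}_n(K)` with respect to the chosen approximations `ιs`. -/
def SCval {V : Type u} [Fintype V] [PartialOrder V] (K : ASC V) (n r : ℕ)
    (ιs : (s : ℕ) → Finset (SdT (Fin n → V) s) → SdT (Fin n → V) s) : ℕ∞ :=
  sInf {k : ℕ∞ | ∃ k0 : ℕ, k = (k0 : ℕ∞) ∧ SCle K n r ιs k0}
/-! ### Auxiliary lemmas for Statement 13 -/

section Statement13Aux

lemma fLE_refl (a : ℕ) : fLE a a := Or.inl rfl

lemma fLE_trans {a b c : ℕ} (h1 : fLE a b) (h2 : fLE b c) : fLE a c := by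
  unfold fLE at *; omega

lemma JLE_refl {n m : ℕ} (a : JP n m) : JLE a a := by
  cases a with
  | none => trivial
  | some p => exact ⟨rfl, Or.inl rfl⟩

lemma JLE_trans {n m : ℕ} {a b c : JP n m} (h1 : JLE a b) (h2 : JLE b c) : JLE a c := by
  cases a with
  | none => cases b with
    | none => cases c with
      | none => trivial
      | some r => exact h2
    | some q => cases c with
      | none => trivial
      | some r => exact fLE_trans (h1 : fLE 0 _) (h2 : _ ∧ _).2
  | some p => cases b with
    | none => exact absurd h1 (by show ¬ fLE (p.2.1+1) 0; unfold fLE; omega)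
    | some q => cases c with
      | none => exact absurd h2 (by show ¬ fLE (q.2.1+1) 0; unfold fLE; omega)
      | some r =>
        exact ⟨(h1 : _ ∧ _).1.trans (h2 : _ ∧ _).1, fLE_trans (h1 : _ ∧ _).2 (h2 : _ ∧ _).2⟩

lemma arm_zero (n : ℕ) (j j' : Fin n) : arm n j 0 = arm n j' 0 :=
  Quotient.sound (Or.inr ⟨rfl, rfl⟩)

/-- coordinates of points on fences -/
def thetaN (m : ℕ) (t : unitInterval) : ℕ :=
  if t = 1 then m
  else if ((⌊(t : ℝ) * ((m / 2 + 1 : ℕ) : ℝ)⌋₊ : ℝ) = (t : ℝ) * ((m / 2 + 1 : ℕ) : ℝ) ∧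
      1 ≤ ⌊(t : ℝ) * ((m / 2 + 1 : ℕ) : ℝ)⌋₊)
    then 2 * ⌊(t : ℝ) * ((m / 2 + 1 : ℕ) : ℝ)⌋₊ - 1
    else 2 * ⌊(t : ℝ) * ((m / 2 + 1 : ℕ) : ℝ)⌋₊

lemma coe_lt_one_of_ne {t : unitInterval} (h : t ≠ 1) : (t : ℝ) < 1 :=
  lt_of_le_of_ne t.2.2 (fun he => h (Subtype.ext he))

lemma theta_one (m : ℕ) : thetaN m 1 = m := if_pos rfl

lemma theta_le (m : ℕ) (t : unitInterval) : thetaN m t ≤ m := by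
  unfold thetaN
  by_cases h1 : t = 1
  · rw [if_pos h1]
  · rw [if_neg h1]
    have ht : (t : ℝ) < 1 := coe_lt_one_of_ne h1
    have hc0 : (0:ℝ) < ((m / 2 + 1 : ℕ) : ℝ) := by exact_mod_cast Nat.succ_pos (m/2)
    have hu0 : 0 ≤ (t : ℝ) * ((m / 2 + 1 : ℕ) : ℝ) := mul_nonneg t.2.1 (le_of_lt hc0)
    have hu : (t : ℝ) * ((m / 2 + 1 : ℕ) : ℝ) < ((m / 2 + 1 : ℕ) : ℝ) := by nlinarith [t.2.1]
    have hk : ⌊(t : ℝ) * ((m / 2 + 1 : ℕ) : ℝ)⌋₊ < m / 2 + 1 := (Nat.floor_lt hu0).mpr hu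
    split <;> omega

lemma theta_zero (m : ℕ) : thetaN m 0 = 0 := by
  unfold thetaN
  rw [if_neg (by intro h; exact zero_ne_one (congrArg Subtype.val h))]
  have h0 : ((0 : unitInterval) : ℝ) = 0 := rfl
  rw [h0]
  simp

lemma theta_eq_zero' {m : ℕ} {t : unitInterval} (h1 : t ≠ 1)
    (h2 : (t : ℝ) * ((m / 2 + 1 : ℕ) : ℝ) < 1) : thetaN m t = 0 := by
  have hc0 : (0:ℝ) < ((m / 2 + 1 : ℕ) : ℝ) := by exact_mod_cast Nat.succ_pos (m/2)
  have hu0 : 0 ≤ (t : ℝ) * ((m / 2 + 1 : ℕ) : ℝ) := mul_nonneg t.2.1 (le_of_lt hc0)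
  have hk : ⌊(t : ℝ) * ((m / 2 + 1 : ℕ) : ℝ)⌋₊ = 0 := Nat.floor_eq_zero.mpr h2
  unfold thetaN
  rw [if_neg h1, hk]
  simp

lemma theta_eq_even {m : ℕ} {t : unitInterval} {a : ℕ} (h1 : t ≠ 1)
    (h2 : (a : ℝ) < (t : ℝ) * ((m / 2 + 1 : ℕ) : ℝ))
    (h3 : (t : ℝ) * ((m / 2 + 1 : ℕ) : ℝ) < (a : ℝ) + 1) : thetaN m t = 2 * a := by
  have hc0 : (0:ℝ) < ((m / 2 + 1 : ℕ) : ℝ) := by exact_mod_cast Nat.succ_pos (m/2)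
  have hu0 : 0 ≤ (t : ℝ) * ((m / 2 + 1 : ℕ) : ℝ) := mul_nonneg t.2.1 (le_of_lt hc0)
  have hk : ⌊(t : ℝ) * ((m / 2 + 1 : ℕ) : ℝ)⌋₊ = a := by
    rw [Nat.floor_eq_iff hu0]; exact ⟨le_of_lt h2, h3⟩
  unfold thetaN
  rw [if_neg h1, hk, if_neg (by rintro ⟨he, -⟩; exact absurd he (ne_of_lt h2))]

lemma theta_eq_odd {m : ℕ} {t : unitInterval} {a : ℕ} (h1 : t ≠ 1)
    (h2 : (a : ℝ) = (t : ℝ) * ((m / 2 + 1 : ℕ) : ℝ)) (h3 : 1 ≤ a) :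
    thetaN m t = 2 * a - 1 := by
  have hc0 : (0:ℝ) < ((m / 2 + 1 : ℕ) : ℝ) := by exact_mod_cast Nat.succ_pos (m/2)
  have hu0 : 0 ≤ (t : ℝ) * ((m / 2 + 1 : ℕ) : ℝ) := mul_nonneg t.2.1 (le_of_lt hc0)
  have hk : ⌊(t : ℝ) * ((m / 2 + 1 : ℕ) : ℝ)⌋₊ = a := by
    rw [Nat.floor_eq_iff hu0]
    exact ⟨le_of_eq h2, by rw [← h2]; linarith⟩
  unfold thetaN
  rw [if_neg h1, hk, if_pos ⟨h2, h3⟩]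

lemma theta_local (m : ℕ) (t : unitInterval) :
    ∃ ε : ℝ, 0 < ε ∧ ∀ t' : unitInterval, |(t' : ℝ) - (t : ℝ)| < ε →
      fLE (thetaN m t') (thetaN m t) := by
  have hc0 : (0:ℝ) < ((m / 2 + 1 : ℕ) : ℝ) := by exact_mod_cast Nat.succ_pos (m/2)
  have hc1 : (1:ℝ) ≤ ((m / 2 + 1 : ℕ) : ℝ) := by exact_mod_cast Nat.succ_le_succ (Nat.zero_le _)
  have hcast : ((m / 2 + 1 : ℕ) : ℝ) = ((m / 2 : ℕ) : ℝ) + 1 := by push_cast; ring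
  have hcc : 1 / ((m / 2 + 1 : ℕ) : ℝ) * ((m / 2 + 1 : ℕ) : ℝ) = 1 :=
    one_div_mul_cancel (ne_of_gt hc0)
  have habs : ∀ (a b : unitInterval) (ε : ℝ), |(b : ℝ) - (a : ℝ)| < ε →
      |(b : ℝ) * ((m / 2 + 1 : ℕ) : ℝ) - (a : ℝ) * ((m / 2 + 1 : ℕ) : ℝ)| <
        ε * ((m / 2 + 1 : ℕ) : ℝ) := by
    intro a b ε h
    rw [← sub_mul, abs_mul, abs_of_pos hc0]
    exact mul_lt_mul_of_pos_right h hc0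
  have hultc : ∀ t' : unitInterval, t' ≠ 1 →
      (t' : ℝ) * ((m / 2 + 1 : ℕ) : ℝ) < ((m / 2 + 1 : ℕ) : ℝ) := by
    intro t' h
    have := coe_lt_one_of_ne h
    nlinarith [t'.2.1]
  have h1c : ((1 : unitInterval) : ℝ) = 1 := rfl
  by_cases h1 : t = 1
  · subst h1
    rcases Nat.eq_zero_or_pos m with hm | hm
    · subst hm
      refine ⟨1, one_pos, fun t' _ => ?_⟩
      have h3 : thetaN 0 t' = 0 := Nat.le_zero.mp (theta_le 0 t')
      rw [theta_one, h3]
      exact Or.inl rfl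
    · refine ⟨1 / ((m / 2 + 1 : ℕ) : ℝ), by positivity, fun t' ht' => ?_⟩
      by_cases h1' : t' = 1
      · rw [h1', theta_one]; exact fLE_refl m
      · have hu' := habs 1 t' _ ht'
        rw [hcc, h1c, one_mul] at hu'
        have habs' := abs_lt.mp hu'
        have hlow : ((m / 2 : ℕ) : ℝ) < (t' : ℝ) * ((m / 2 + 1 : ℕ) : ℝ) := by
          rw [hcast] at habs' ⊢; linarith [habs'.1]
        have hhigh : (t' : ℝ) * ((m / 2 + 1 : ℕ) : ℝ) < ((m / 2 : ℕ) : ℝ) + 1 := by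
          rw [← hcast]; exact hultc t' h1'
        rw [theta_one, theta_eq_even h1' hlow hhigh]
        have h2 : m / 2 * 2 ≤ m ∧ m ≤ m / 2 * 2 + 1 := by omega
        unfold fLE; omega
  · have hu0 : 0 ≤ (t : ℝ) * ((m / 2 + 1 : ℕ) : ℝ) := mul_nonneg t.2.1 (le_of_lt hc0)
    have hk1 : (⌊(t : ℝ) * ((m / 2 + 1 : ℕ) : ℝ)⌋₊ : ℝ) ≤ (t : ℝ) * ((m / 2 + 1 : ℕ) : ℝ) :=
      Nat.floor_le hu0
    have hk2 : (t : ℝ) * ((m / 2 + 1 : ℕ) : ℝ) < (⌊(t : ℝ) * ((m / 2 + 1 : ℕ) : ℝ)⌋₊ : ℝ) + 1 :=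
      Nat.lt_floor_add_one _
    have hkm : ⌊(t : ℝ) * ((m / 2 + 1 : ℕ) : ℝ)⌋₊ ≤ m / 2 := by
      have h2 : (t : ℝ) * ((m / 2 + 1 : ℕ) : ℝ) < ((m / 2 + 1 : ℕ) : ℝ) := hultc t h1
      have h3 : (⌊(t : ℝ) * ((m / 2 + 1 : ℕ) : ℝ)⌋₊ : ℝ) < ((m / 2 + 1 : ℕ) : ℝ) :=
        lt_of_le_of_lt hk1 h2
      have h4 : ⌊(t : ℝ) * ((m / 2 + 1 : ℕ) : ℝ)⌋₊ < m / 2 + 1 := by exact_mod_cast h3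
      omega
    set k : ℕ := ⌊(t : ℝ) * ((m / 2 + 1 : ℕ) : ℝ)⌋₊ with hkdef
    by_cases heq : (k : ℝ) = (t : ℝ) * ((m / 2 + 1 : ℕ) : ℝ)
    · by_cases hk0 : 1 ≤ k
      · -- odd case
        have hθ : thetaN m t = 2 * k - 1 := theta_eq_odd h1 heq hk0
        refine ⟨1 / ((m / 2 + 1 : ℕ) : ℝ), by positivity, fun t' ht' => ?_⟩
        have hu' := habs t t' _ ht'
        rw [hcc] at hu'
        have habs' := abs_lt.mp hu'
        by_cases h1' : t' = 1
        · exfalso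
          rw [h1', h1c, one_mul] at habs'
          have hkle : (k : ℝ) ≤ ((m / 2 : ℕ) : ℝ) := by exact_mod_cast hkm
          rw [← heq] at habs'
          rw [hcast] at habs'
          linarith [habs'.1]
        · rcases lt_trichotomy ((t' : ℝ) * ((m / 2 + 1 : ℕ) : ℝ))
            ((t : ℝ) * ((m / 2 + 1 : ℕ) : ℝ)) with hlt | heq' | hgt
          · have hcast1 : ((k - 1 : ℕ) : ℝ) = (k : ℝ) - 1 := by
              push_cast [Nat.cast_sub hk0]; ring
            have hθ' : thetaN m t' = 2 * (k - 1) := by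
              apply theta_eq_even h1'
              · rw [hcast1, ← heq] at *; linarith [habs'.1]
              · rw [hcast1, ← heq] at *; linarith
            rw [hθ, hθ']
            unfold fLE; omega
          · have hθ' : thetaN m t' = 2 * k - 1 := theta_eq_odd h1' (heq.trans heq'.symm) hk0
            rw [hθ, hθ']; exact fLE_refl _
          · have hθ' : thetaN m t' = 2 * k := by
              apply theta_eq_even h1'
              · rw [heq]; exact hgt
              · rw [← heq] at *; linarith [habs'.2]
            rw [hθ, hθ']
            unfold fLE; omega
      · -- k = 0, u = 0
        have hk0' : k = 0 := by omega
        have hθ : thetaN m t = 0 := by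
          apply theta_eq_zero' h1
          rw [← heq, hk0']; norm_num
        refine ⟨1 / ((m / 2 + 1 : ℕ) : ℝ), by positivity, fun t' ht' => ?_⟩
        have hu' := habs t t' _ ht'
        rw [hcc] at hu'
        have habs' := abs_lt.mp hu'
        by_cases h1' : t' = 1
        · exfalso
          rw [h1', h1c, one_mul, ← heq, hk0'] at habs'
          norm_num at habs'
          linarith
        · have hθ' : thetaN m t' = 0 := by
            apply theta_eq_zero' h1'
            have h5 := habs'.2
            rw [← heq, hk0'] at h5
            have h6 : ((0:ℕ):ℝ) = 0 := by norm_num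
            rw [h6] at h5
            linarith
          rw [hθ, hθ']; exact fLE_refl _
    · -- strict interior: theta = 2k
      have hk1' : (k : ℝ) < (t : ℝ) * ((m / 2 + 1 : ℕ) : ℝ) := lt_of_le_of_ne hk1 heq
      have hθ : thetaN m t = 2 * k := theta_eq_even h1 hk1' hk2
      have hmin : 0 < min ((t : ℝ) * ((m / 2 + 1 : ℕ) : ℝ) - (k : ℝ))
          ((k : ℝ) + 1 - (t : ℝ) * ((m / 2 + 1 : ℕ) : ℝ)) :=
        lt_min (by linarith) (by linarith)
      refine ⟨min ((t : ℝ) * ((m / 2 + 1 : ℕ) : ℝ) - (k : ℝ))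
          ((k : ℝ) + 1 - (t : ℝ) * ((m / 2 + 1 : ℕ) : ℝ)) / ((m / 2 + 1 : ℕ) : ℝ),
        by positivity, fun t' ht' => ?_⟩
      have hu' := habs t t' _ ht'
      rw [div_mul_cancel₀ _ (ne_of_gt hc0)] at hu'
      have habs' := abs_lt.mp hu'
      have hmin1 := min_le_left ((t : ℝ) * ((m / 2 + 1 : ℕ) : ℝ) - (k : ℝ))
        ((k : ℝ) + 1 - (t : ℝ) * ((m / 2 + 1 : ℕ) : ℝ))
      have hmin2 := min_le_right ((t : ℝ) * ((m / 2 + 1 : ℕ) : ℝ) - (k : ℝ))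
        ((k : ℝ) + 1 - (t : ℝ) * ((m / 2 + 1 : ℕ) : ℝ))
      have hlow : (k : ℝ) < (t' : ℝ) * ((m / 2 + 1 : ℕ) : ℝ) := by linarith [habs'.1]
      have hhigh : (t' : ℝ) * ((m / 2 + 1 : ℕ) : ℝ) < (k : ℝ) + 1 := by linarith [habs'.2]
      by_cases h1' : t' = 1
      · exfalso
        rw [h1', h1c, one_mul] at hhigh
        have hkle : (k : ℝ) ≤ ((m / 2 : ℕ) : ℝ) := by exact_mod_cast hkm
        rw [hcast] at hhigh
        linarith
      · rw [hθ, theta_eq_even h1' hlow hhigh]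
        exact fLE_refl _

end Statement13Aux
section Statement13Aux2

/-- position map from the wedge arm into `J_{n,m}` -/
def posJ (n m : ℕ) (j : Fin n) (t : unitInterval) : JP n m :=
  if h : thetaN m t = 0 then none
  else some (j, ⟨thetaN m t - 1, by have := theta_le m t; omega⟩)

lemma jle_posJ {n m : ℕ} (j : Fin n) {t t' : unitInterval}
    (h : fLE (thetaN m t') (thetaN m t)) : JLE (posJ n m j t') (posJ n m j t) := by
  unfold posJ
  by_cases h1 : thetaN m t' = 0 <;> by_cases h2 : thetaN m t = 0
  · rw [dif_pos h1, dif_pos h2]; trivial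
  · rw [dif_pos h1, dif_neg h2]
    show fLE 0 (thetaN m t - 1 + 1)
    have e : thetaN m t - 1 + 1 = thetaN m t := by omega
    rw [e, ← h1]; exact h
  · exfalso
    rw [h2] at h
    unfold fLE at h; omega
  · rw [dif_neg h1, dif_neg h2]
    refine ⟨rfl, ?_⟩
    show fLE (thetaN m t' - 1 + 1) (thetaN m t - 1 + 1)
    have e1 : thetaN m t' - 1 + 1 = thetaN m t' := by omega
    have e2 : thetaN m t - 1 + 1 = thetaN m t := by omega
    rw [e1, e2]; exact h

lemma jAct_posJ {n m : ℕ} (g : Equiv.Perm (Fin n)) (j : Fin n) (t : unitInterval) :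
    jAct g (posJ n m j t) = posJ n m (g j) t := by
  unfold posJ
  by_cases h : thetaN m t = 0
  · rw [dif_pos h, dif_pos h]; rfl
  · rw [dif_neg h, dif_neg h]; rfl

lemma posJ_one (n m : ℕ) (j : Fin n) : posJ n m j 1 = endPt n m j := by
  unfold posJ endPt
  rcases Nat.eq_zero_or_pos m with hm | hm
  · rw [dif_pos (by rw [theta_one, hm]), dif_neg (by omega)]
  · have hθ : thetaN m 1 = m := theta_one m
    rw [dif_neg (by omega), dif_pos hm]
    refine congrArg some (Prod.ext rfl (Fin.ext ?_))
    show thetaN m 1 - 1 = m - 1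
    omega

lemma posJ_zero (n m : ℕ) (j : Fin n) : posJ n m j 0 = none := by
  unfold posJ
  rw [dif_pos (theta_zero m)]

/-- the induced map from the wedge -/
def pwMap (n m : ℕ) : WedgeI n → JP n m :=
  Quotient.lift (fun p : Fin n × unitInterval => posJ n m p.1 p.2) (by
    rintro ⟨j, t⟩ ⟨j', t'⟩ (h | ⟨h1, h2⟩)
    · cases h; rfl
    · dsimp only at h1 h2 ⊢
      rw [h1, h2, posJ_zero, posJ_zero])

lemma pwMap_arm (n m : ℕ) (j : Fin n) (t : unitInterval) :
    pwMap n m (arm n j t) = posJ n m j t := rfl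

lemma posJ_open (n m : ℕ) (j : Fin n) (p0 : JP n m) :
    IsOpen {t : unitInterval | JLE (posJ n m j t) p0} := by
  rw [Metric.isOpen_iff]
  intro t ht
  obtain ⟨ε, hε, hloc⟩ := theta_local m t
  refine ⟨ε, hε, fun t' ht' => ?_⟩
  have hd : |(t' : ℝ) - (t : ℝ)| < ε := by
    rw [Metric.mem_ball, Subtype.dist_eq, Real.dist_eq] at ht'
    exact ht'
  exact JLE_trans (jle_posJ j (hloc t' hd)) ht

end Statement13Aux2
/-- For maps `f_1, …, f_n : P → Q` of finite `T₀` spaces compatible with a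
`Σ_n`-action on `P`, symmetric (topological) homotopy is equivalent to symmetric
combinatorial homotopy. -/
theorem statement13 {P Q : Type} [PartialOrder P] [PartialOrder Q] [Finite P] [Finite Q]
    (n : ℕ) (hn : 2 ≤ n)
    (act : Equiv.Perm (Fin n) → P → P) (hact : ∀ g, Monotone (act g))
    (f : Fin n → P → Q) (hf : ∀ j, Monotone (f j))
    (hsym : ∀ (j : Fin n) (g : Equiv.Perm (Fin n)) (x : P), f j (act g x) = f (g j) x) :
    (∃ H : P × WedgeI n → Q,
      @Continuous (P × WedgeI n) Q (prodTop P (lowTop P (· ≤ ·)) (WedgeI n))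
        (lowTop Q (· ≤ ·)) H ∧
      (∀ (x : P) (j : Fin n), H (x, arm n j 1) = f j x) ∧
      (∀ (g : Equiv.Perm (Fin n)) (x : P) (t : unitInterval) (j : Fin n),
        H (act g x, arm n j t) = H (x, arm n (g j) t)))
    ↔
    (∃ (m : ℕ) (H : P → JP n m → Q),
      (∀ (x y : P) (t t' : JP n m), x ≤ y → JLE t t' → H x t ≤ H y t') ∧
      (∀ (x : P) (j : Fin n), H x (endPt n m j) = f j x) ∧
      (∀ (g : Equiv.Perm (Fin n)) (x : P) (t : JP n m), H (act g x) t = H x (jAct g t))) := by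
  have hn0 : 0 < n := by omega
  letI : TopologicalSpace P := lowTop P (· ≤ ·)
  letI : TopologicalSpace Q := lowTop Q (· ≤ ·)
  constructor
  · rintro ⟨H, Hcont, Hend, Heqv⟩
    rcases isEmpty_or_nonempty P with hP | hP
    · exact ⟨0, fun x _ => (hP.false x).elim,
        fun x _ _ _ _ _ => (hP.false x).elim,
        fun x _ => (hP.false x).elim,
        fun _ x _ => (hP.false x).elim⟩
    haveI : Fintype P := Fintype.ofFinite P
    haveI : Nonempty (Fin n) := ⟨⟨0, hn0⟩⟩
    have coe0 : ((0 : unitInterval) : ℝ) = 0 := rfl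
    -- monotonicity of H in the P variable
    have hmono : ∀ (x y : P) (w : WedgeI n), x ≤ y → H (x, w) ≤ H (y, w) := by
      intro x y w hxy
      have hVopen : @IsOpen Q (lowTop Q (· ≤ ·)) {q | q ≤ H (y, w)} :=
        fun a ha b hb => le_trans hb ha
      have hW := Hcont.isOpen_preimage _ hVopen
      obtain ⟨u, v, hu, hv, hyu, hwv, hsub⟩ := isOpen_prod_iff.mp hW y w (le_refl _)
      have hu' : ∀ a ∈ u, ∀ b, b ≤ a → b ∈ u := hu
      exact hsub ⟨hu' y hyu x hxy, hwv⟩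
    -- local continuity along arms
    have harm : ∀ (x : P) (j : Fin n) (s : unitInterval), ∃ ε : ℝ, 0 < ε ∧
        ∀ z : P, z ≤ x → ∀ t : unitInterval, |(t : ℝ) - (s : ℝ)| < ε →
          H (z, arm n j t) ≤ H (x, arm n j s) := by
      intro x j s
      have hVopen : @IsOpen Q (lowTop Q (· ≤ ·)) {q | q ≤ H (x, arm n j s)} :=
        fun a ha b hb => le_trans hb ha
      have hW := Hcont.isOpen_preimage _ hVopen
      obtain ⟨u, v, hu, hv, hxu, hwv, hsub⟩ := isOpen_prod_iff.mp hW x (arm n j s) (le_refl _)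
      have hv' : IsOpen ((@Quotient.mk' _ (wedgeSetoid n)) ⁻¹' v) :=
        hv.preimage continuous_quotient_mk'
      obtain ⟨u2, v2, hu2, hv2, hju2, hsv2, hsub2⟩ := isOpen_prod_iff.mp hv' j s hwv
      obtain ⟨ε, hε, hball⟩ := Metric.isOpen_iff.mp hv2 s hsv2
      refine ⟨ε, hε, fun z hz t ht => ?_⟩
      have h1 : arm n j t ∈ v := hsub2 ⟨hju2, hball (Metric.mem_ball.mpr (by
        rw [Subtype.dist_eq, Real.dist_eq]; exact ht))⟩
      have hu' : ∀ a ∈ u, ∀ b, b ≤ a → b ∈ u := hu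
      exact hsub ⟨hu' x hxu z hz, h1⟩
    -- uniform version over the finite poset and the arms
    have hepsaux : ∀ s : unitInterval, ∃ ε : ℝ, 0 < ε ∧
        ∀ (x z : P) (j : Fin n), z ≤ x → ∀ t : unitInterval,
          |(t : ℝ) - (s : ℝ)| < ε → H (z, arm n j t) ≤ H (x, arm n j s) := by
      intro s
      choose F hF1 hF2 using fun p : P × Fin n => harm p.1 p.2 s
      refine ⟨Finset.univ.inf' Finset.univ_nonempty F, ?_, ?_⟩
      · exact (Finset.lt_inf'_iff _).mpr fun p _ => hF1 p
      · intro x z j hz t ht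
        exact hF2 (x, j) z hz t
          (lt_of_lt_of_le ht (Finset.inf'_le _ (Finset.mem_univ (x, j))))
    choose E hE1 hE2 using hepsaux
    -- Lebesgue-type argument
    obtain ⟨T, hT⟩ := isCompact_univ.elim_finite_subcover
      (fun s : unitInterval => Metric.ball s (E s / 2))
      (fun s => Metric.isOpen_ball)
      (fun t _ => Set.mem_iUnion.mpr ⟨t, Metric.mem_ball_self (half_pos (hE1 t))⟩)
    have hTne : T.Nonempty := by
      obtain ⟨s, hsT, -⟩ := Set.mem_iUnion₂.mp (hT (Set.mem_univ (0 : unitInterval)))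
      exact ⟨s, hsT⟩
    have hδ : 0 < T.inf' hTne fun s => E s / 2 :=
      (Finset.lt_inf'_iff _).mpr fun s _ => half_pos (hE1 s)
    obtain ⟨N0, hN0⟩ := exists_nat_one_div_lt hδ
    set N : ℕ := N0 + 1 with hNdef
    have hN1 : 1 ≤ N := by omega
    have hNpos : (0 : ℝ) < (N : ℝ) := by exact_mod_cast Nat.succ_pos N0
    have hNδ : 1 / (N : ℝ) < T.inf' hTne fun s => E s / 2 := by
      have hc : ((N0 : ℝ) + 1) = (N : ℝ) := by rw [hNdef]; push_cast; ring
      rw [← hc]; exact hN0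
    -- the subdivision points
    set tp : ℕ → unitInterval := fun ℓ =>
      ⟨min ((ℓ : ℝ) / (N : ℝ)) 1, le_min (by positivity) zero_le_one, min_le_right _ _⟩
      with htpdef
    have tpcoe : ∀ ℓ : ℕ, (tp ℓ : ℝ) = min ((ℓ : ℝ) / (N : ℝ)) 1 := fun ℓ => rfl
    have tp0 : tp 0 = 0 := Subtype.ext (by rw [tpcoe]; norm_num)
    have tpN : tp N = 1 := Subtype.ext (by
      rw [tpcoe]
      have hd : (N : ℝ) / (N : ℝ) = 1 := div_self (ne_of_gt hNpos)
      rw [hd, min_self]; rfl)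
    have tp_mono : ∀ a b : ℕ, a ≤ b → (tp a : ℝ) ≤ (tp b : ℝ) := by
      intro a b h
      rw [tpcoe, tpcoe]
      have hab : (a : ℝ) ≤ (b : ℝ) := by exact_mod_cast h
      exact min_le_min (by gcongr) le_rfl
    have tp_diff : ∀ ℓ : ℕ, (tp (ℓ + 1) : ℝ) - (tp ℓ : ℝ) ≤ 1 / (N : ℝ) := by
      intro ℓ
      rw [tpcoe, tpcoe]
      have hc : ((ℓ + 1 : ℕ) : ℝ) = (ℓ : ℝ) + 1 := by push_cast; ring
      rw [hc]
      have hkey : ((ℓ : ℝ) + 1) / (N : ℝ) = (ℓ : ℝ) / (N : ℝ) + 1 / (N : ℝ) := by ring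
      have h1N : 0 < 1 / (N : ℝ) := by positivity
      rcases min_cases (((ℓ : ℝ) + 1) / (N : ℝ)) 1 with ⟨e1, i1⟩ | ⟨e1, i1⟩ <;>
        rcases min_cases ((ℓ : ℝ) / (N : ℝ)) 1 with ⟨e2, i2⟩ | ⟨e2, i2⟩ <;>
        rw [e1, e2] <;> linarith
    -- choice of interval centers
    have hσex : ∀ ℓ : ℕ, ∃ s : unitInterval, ∀ t : unitInterval,
        (tp ℓ : ℝ) ≤ (t : ℝ) → (t : ℝ) ≤ (tp (ℓ + 1) : ℝ) → |(t : ℝ) - (s : ℝ)| < E s := by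
      intro ℓ
      obtain ⟨s, hsT, hs⟩ := Set.mem_iUnion₂.mp (hT (Set.mem_univ (tp ℓ)))
      have hs' : |(tp ℓ : ℝ) - (s : ℝ)| < E s / 2 := by
        rw [Metric.mem_ball, Subtype.dist_eq, Real.dist_eq] at hs; exact hs
      have hδs : T.inf' hTne (fun s => E s / 2) ≤ E s / 2 := Finset.inf'_le _ hsT
      refine ⟨s, fun t h1 h2 => ?_⟩
      have habs : |(t : ℝ) - (tp ℓ : ℝ)| ≤ 1 / (N : ℝ) := by
        rw [abs_of_nonneg (by linarith)]
        linarith [tp_diff ℓ]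
      have htri := abs_sub_le (t : ℝ) (tp ℓ : ℝ) (s : ℝ)
      linarith
    choose σ hσ using hσex
    have key : ∀ (x z : P) (j : Fin n) (ℓ : ℕ) (t : unitInterval), z ≤ x →
        (tp ℓ : ℝ) ≤ (t : ℝ) → (t : ℝ) ≤ (tp (ℓ + 1) : ℝ) →
        H (z, arm n j t) ≤ H (x, arm n j (σ ℓ)) :=
      fun x z j ℓ t hz h1 h2 => hE2 (σ ℓ) x z j hz t (hσ ℓ t h1 h2)
    refine ⟨2 * N, fun x t => t.elim (H (x, arm n ⟨0, hn0⟩ 0))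
      (fun p => if p.2.1 % 2 = 1 then H (x, arm n p.1 (tp ((p.2.1 + 1) / 2)))
        else H (x, arm n p.1 (σ (p.2.1 / 2)))), ?_, ?_, ?_⟩
    · -- joint monotonicity
      intro x y t t' hxy hle
      cases t with
      | none =>
        cases t' with
        | none => exact hmono x y _ hxy
        | some q =>
          have hf : fLE 0 (q.2.1 + 1) := hle
          have hq : q.2.1 = 0 := by unfold fLE at hf; omega
          simp only [Option.elim_none, Option.elim_some]
          rw [if_neg (by omega)]
          have e : q.2.1 / 2 = 0 := by omega
          rw [e, arm_zero n ⟨0, hn0⟩ q.1]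
          refine key y x q.1 0 0 hxy ?_ ?_
          · rw [tp0]
          · rw [coe0]; exact (tp 1).2.1
      | some p =>
        cases t' with
        | none => exact absurd hle (by show ¬fLE (p.2.1 + 1) 0; unfold fLE; omega)
        | some q =>
          obtain ⟨j1, i1⟩ := p; obtain ⟨j2, i2⟩ := q
          obtain ⟨hj, hf⟩ := hle
          dsimp only at hj hf
          subst hj
          simp only [Option.elim_some]
          rcases hf with heq | ⟨he, ho, hadj⟩
          · have hii : i1 = i2 := Fin.ext (by omega)
            subst hii
            by_cases hp : i1.1 % 2 = 1
            · rw [if_pos hp, if_pos hp]; exact hmono x y _ hxy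
            · rw [if_neg hp, if_neg hp]; exact hmono x y _ hxy
          · have hi1 : i1.1 % 2 = 1 := by omega
            have hi2 : ¬i2.1 % 2 = 1 := by omega
            rw [if_pos hi1, if_neg hi2]
            rcases hadj with h12 | h21
            · have e : i2.1 / 2 = (i1.1 + 1) / 2 := by omega
              rw [e]
              exact key y x j1 ((i1.1 + 1) / 2) (tp ((i1.1 + 1) / 2)) hxy le_rfl
                (tp_mono _ _ (Nat.le_succ _))
            · have e : (i1.1 + 1) / 2 = i2.1 / 2 + 1 := by omega
              rw [e]
              exact key y x j1 (i2.1 / 2) (tp (i2.1 / 2 + 1)) hxy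
                (tp_mono _ _ (Nat.le_succ _)) le_rfl
    · -- endpoints
      intro x j
      have h2N : 0 < 2 * N := by omega
      unfold endPt
      rw [dif_pos h2N]
      simp only [Option.elim_some]
      have hio : (2 * N - 1) % 2 = 1 := by omega
      rw [if_pos hio]
      have e : (2 * N - 1 + 1) / 2 = N := by omega
      rw [e, tpN]
      exact Hend x j
    · -- equivariance
      intro g x t
      cases t with
      | none =>
        simp only [jAct, Option.map_none, Option.elim_none]
        rw [Heqv g x 0 ⟨0, hn0⟩, arm_zero n (g ⟨0, hn0⟩) ⟨0, hn0⟩]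
      | some p =>
        obtain ⟨j, i⟩ := p
        simp only [jAct, Option.map_some, Option.elim_some]
        by_cases hp : i.1 % 2 = 1
        · rw [if_pos hp, if_pos hp]; exact Heqv g x _ j
        · rw [if_neg hp, if_neg hp]; exact Heqv g x _ j
  · rintro ⟨m, Hc, Hcm, Hce, Hcq⟩
    refine ⟨fun p => Hc p.1 (pwMap n m p.2), ?_, ?_, ?_⟩
    · -- continuity
      refine continuous_def.mpr fun V hV => ?_
      have hV' : ∀ a ∈ V, ∀ b, b ≤ a → b ∈ V := hV
      refine isOpen_prod_iff.mpr fun x w hw => ?_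
      refine ⟨{z | z ≤ x}, {w' | JLE (pwMap n m w') (pwMap n m w)},
        fun a ha b hb => le_trans hb ha, ?_, le_refl x, JLE_refl _, ?_⟩
      · have hpre : IsOpen ((@Quotient.mk' _ (wedgeSetoid n)) ⁻¹'
            {w' | JLE (pwMap n m w') (pwMap n m w)}) := by
          have heq : ((@Quotient.mk' _ (wedgeSetoid n)) ⁻¹'
              {w' | JLE (pwMap n m w') (pwMap n m w)}) =
              ⋃ j : Fin n, {j} ×ˢ {t : unitInterval | JLE (posJ n m j t) (pwMap n m w)} := by
            ext ⟨j, t⟩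
            constructor
            · intro h
              exact Set.mem_iUnion.mpr ⟨j, Set.mk_mem_prod rfl h⟩
            · intro h
              obtain ⟨j', hj'⟩ := Set.mem_iUnion.mp h
              obtain ⟨h1, h2⟩ := hj'
              obtain rfl : j = j' := h1
              exact h2
          rw [heq]
          exact isOpen_iUnion fun j => (isOpen_discrete _).prod (posJ_open n m j _)
        exact isOpen_coinduced.mpr hpre
      · rintro ⟨z, w'⟩ ⟨hz, hw'⟩
        exact hV' _ hw _ (Hcm z x _ _ hz hw')
    · intro x j
      show Hc x (pwMap n m (arm n j 1)) = f j x
      rw [pwMap_arm, posJ_one]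
      exact Hce x j
    · intro g x t j
      show Hc (act g x) (posJ n m j t) = Hc x (posJ n m (g j) t)
      rw [Hcq g x (posJ n m j t), jAct_posJ]
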